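/- Fix d ≥ 3 and two distinct elements x, y ∈ Fin d. Let A_1 = B_1 = A_2 = B_2 = Fin d, write P_z = |z⟩⟨z| for the rank-one diagonal projector onto basis element z, and define the matrix R indexed by A_1 × B_1 × A_2 × B_2 by R = (1 − P_y) ⊗ P_x ⊗ P_x ⊗ P_x + (1 − P_y) ⊗ P_y ⊗ P_x ⊗ P_y + P_y ⊗ P_x ⊗ (1 − P_x) ⊗ P_y + P_y ⊗ P_y ⊗ (1 − P_x) ⊗ P_x + P_y ⊗ (1 − P_x − P_y) ⊗ P_x ⊗ (1 − P_x − P_y) (the Liu–Chiribella (2,2,?) process). Then R is not an ordinary bipartite process matrix with trivial global input and output: there exist quantum channel Choi operators C_1 (PSD, indexed by A_1 × B_1, Tr_{B_1}[C_1] = 1_{A_1}) and C_2 (PSD, indexed by A_2 × B_2, Tr_{B_2}[C_2] = 1_{A_2}) such that Tr[Rᵀ (C_1 ⊗ C_2)] ≠ 1. -/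

import Mathlib

open Matrix ComplexOrder

/-- The rank-one diagonal projector `|z⟩⟨z|` onto the basis element `z` of `Fin d`. -/
noncomputable def proj (d : ℕ) (z : Fin d) : Matrix (Fin d) (Fin d) ℂ :=
  Matrix.of fun i j => if i = z ∧ j = z then 1 else 0

/-- The tensor (Kronecker) product of four matrices on `Fin d`, indexed by
`Fin d × Fin d × Fin d × Fin d`. -/
noncomputable def kron4 {d : ℕ} (M1 M2 M3 M4 : Matrix (Fin d) (Fin d) ℂ) :
    Matrix (Fin d × Fin d × Fin d × Fin d) (Fin d × Fin d × Fin d × Fin d) ℂ :=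
  Matrix.of fun u u' =>
    M1 u.1 u'.1 * M2 u.2.1 u'.2.1 * M3 u.2.2.1 u'.2.2.1 * M4 u.2.2.2 u'.2.2.2

/-- The Liu–Chiribella `(2,2,?)` process. -/
noncomputable def RLC22 (d : ℕ) (x y : Fin d) :
    Matrix (Fin d × Fin d × Fin d × Fin d) (Fin d × Fin d × Fin d × Fin d) ℂ :=
  kron4 (1 - proj d y) (proj d x) (proj d x) (proj d x) +
  kron4 (1 - proj d y) (proj d y) (proj d x) (proj d y) +
  kron4 (proj d y) (proj d x) (1 - proj d x) (proj d y) +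
  kron4 (proj d y) (proj d y) (1 - proj d x) (proj d x) +
  kron4 (proj d y) (1 - proj d x - proj d y) (proj d x) (1 - proj d x - proj d y)

/-- The tensor (Kronecker) product of a matrix on `A1 × B1` and a matrix on `A2 × B2`,
indexed by `A1 × B1 × A2 × B2`. -/
noncomputable def kron2 {A1 B1 A2 B2 : Type*}
    (C1 : Matrix (A1 × B1) (A1 × B1) ℂ) (C2 : Matrix (A2 × B2) (A2 × B2) ℂ) :
    Matrix (A1 × B1 × A2 × B2) (A1 × B1 × A2 × B2) ℂ :=
  Matrix.of fun u u' =>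
    C1 (u.1, u.2.1) (u'.1, u'.2.1) * C2 (u.2.2.1, u.2.2.2) (u'.2.2.1, u'.2.2.2)


noncomputable def Cx (d : ℕ) (x : Fin d) : Matrix (Fin d × Fin d) (Fin d × Fin d) ℂ :=
  Matrix.of fun p q => if p.1 = q.1 ∧ p.2 = x ∧ q.2 = x then 1 else 0

lemma Cx_psd (d : ℕ) (x : Fin d) : (Cx d x).PosSemidef := by
  rw [posSemidef_iff_dotProduct_mulVec]
  constructor
  · ext p q
    simp only [Cx, Matrix.conjTranspose_apply, Matrix.of_apply]
    by_cases h : q.1 = p.1 ∧ q.2 = x ∧ p.2 = x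
    · rw [if_pos h, if_pos ⟨h.1.symm, h.2.2, h.2.1⟩]; simp
    · rw [if_neg h, if_neg (fun h' => h ⟨h'.1.symm, h'.2.2, h'.2.1⟩)]; simp
  · intro v
    have hmv : ∀ p : Fin d × Fin d, (Cx d x *ᵥ v) p = if p.2 = x then v (p.1, x) else 0 := by
      intro p
      simp only [Matrix.mulVec, dotProduct, Cx, Matrix.of_apply]
      rw [Fintype.sum_prod_type]
      by_cases hp : p.2 = x
      · simp only [hp, true_and]
        rw [Finset.sum_eq_single p.1]
        · rw [Finset.sum_eq_single x] <;> simp +contextual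
        · intro b _ hb; rw [Finset.sum_eq_zero]; intro c _;
          rw [if_neg (fun h => hb h.1.symm), zero_mul]
        · simp
      · rw [if_neg hp, Finset.sum_eq_zero]; intro a _; rw [Finset.sum_eq_zero]; intro b _
        rw [if_neg (fun h => hp h.2.1), zero_mul]
    simp only [dotProduct, Pi.star_apply, hmv]
    rw [Fintype.sum_prod_type]
    apply Finset.sum_nonneg
    intro a _
    rw [Finset.sum_eq_single x]
    · simp only [if_pos rfl]; exact star_mul_self_nonneg _
    · intro b _ hb; rw [if_neg hb, mul_zero]
    · simp

lemma Cx_tr (d : ℕ) (x : Fin d) (a a' : Fin d) :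
    (∑ b : Fin d, Cx d x (a, b) (a', b)) = if a = a' then 1 else 0 := by
  simp only [Cx, Matrix.of_apply]
  rw [Finset.sum_eq_single x]
  · by_cases h : a = a' <;> simp [h]
  · intro b _ hb; rw [if_neg (fun h => hb h.2.1)]
  · simp


lemma hK (d : ℕ) (x : Fin d) (p q : Fin d × Fin d × Fin d × Fin d) :
    kron2 (Cx d x) (Cx d x) q p =
      if q = (p.1, x, p.2.2.1, x) ∧ p.2.1 = x ∧ p.2.2.2 = x then 1 else 0 := by
  obtain ⟨a1, b1, a2, b2⟩ := p
  obtain ⟨c1, e1, c2, e2⟩ := q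
  simp only [kron2, Cx, Matrix.of_apply, Prod.mk.injEq]
  split_ifs <;> simp_all

lemma hR (d : ℕ) (x y : Fin d) (hxy : x ≠ y) (a1 a2 : Fin d) :
    RLC22 d x y (a1, x, a2, x) (a1, x, a2, x) =
      (if a1 = y then 0 else 1) * (if a2 = x then 1 else 0) := by
  have h : ¬(x = y ∧ x = y) := fun h => hxy h.1
  simp only [RLC22, kron4, proj, Matrix.add_apply, Matrix.sub_apply, Matrix.one_apply,
    Matrix.of_apply, if_pos (⟨rfl, rfl⟩ : x = x ∧ x = x), if_neg h, if_pos rfl]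
  by_cases h1 : a1 = y <;> by_cases h2 : a2 = x <;> simp [h1, h2]

lemma trace_val (d : ℕ) (x y : Fin d) (hxy : x ≠ y) :
    ((RLC22 d x y)ᵀ * kron2 (Cx d x) (Cx d x)).trace = (d - 1 : ℂ) := by
  have h2 : ∀ p, (∑ q, RLC22 d x y q p * kron2 (Cx d x) (Cx d x) q p)
      = if p.2.1 = x ∧ p.2.2.2 = x then RLC22 d x y (p.1, x, p.2.2.1, x) p else 0 := by
    intro p
    simp only [hK]
    by_cases hp : p.2.1 = x ∧ p.2.2.2 = x
    · rw [if_pos hp]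
      rw [Finset.sum_eq_single (p.1, x, p.2.2.1, x)]
      · simp [hp]
      · intro q _ hq; simp [hq]
      · simp
    · rw [if_neg hp, Finset.sum_eq_zero]
      intro q _
      rw [if_neg (fun h => hp h.2), mul_zero]
  have htr : ((RLC22 d x y)ᵀ * kron2 (Cx d x) (Cx d x)).trace
      = ∑ p : Fin d × Fin d × Fin d × Fin d,
          if p.2.1 = x ∧ p.2.2.2 = x then RLC22 d x y (p.1, x, p.2.2.1, x) p else 0 := by
    simp only [Matrix.trace, Matrix.diag, Matrix.mul_apply, Matrix.transpose_apply]
    exact Finset.sum_congr rfl fun p _ => h2 p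
  rw [htr]
  rw [Fintype.sum_prod_type]
  have step : ∀ a1 : Fin d,
      (∑ r : Fin d × Fin d × Fin d,
        if r.1 = x ∧ r.2.2 = x then RLC22 d x y (a1, x, r.2.1, x) (a1, r.1, r.2.1, r.2.2) else 0)
      = ∑ a2 : Fin d, RLC22 d x y (a1, x, a2, x) (a1, x, a2, x) := by
    intro a1
    rw [Fintype.sum_prod_type]
    rw [Finset.sum_eq_single x]
    · rw [Fintype.sum_prod_type]
      apply Finset.sum_congr rfl
      intro a2 _
      rw [Finset.sum_eq_single x]
      · simp
      · intro b _ hb; rw [if_neg (fun h => hb h.2)]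
      · simp
    · intro b _ hb
      rw [Finset.sum_eq_zero]
      intro r _
      rw [if_neg (fun h => hb h.1)]
    · simp
  simp only [step, hR d x y hxy]
  rw [← Finset.sum_mul_sum]
  have hx : (∑ a2 : Fin d, if a2 = x then (1:ℂ) else 0) = 1 := by
    rw [Finset.sum_ite_eq' Finset.univ x (fun _ => (1:ℂ))]; simp
  have hy : (∑ a1 : Fin d, if a1 = y then (0:ℂ) else 1) = (d : ℂ) - 1 := by
    have : ∀ a1 : Fin d, (if a1 = y then (0:ℂ) else 1) = 1 - if a1 = y then 1 else 0 := by
      intro a1; by_cases h : a1 = y <;> simp [h]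
    simp only [this]
    rw [Finset.sum_sub_distrib, Finset.sum_const, Finset.sum_ite_eq' Finset.univ y (fun _ => (1:ℂ))]
    simp
  rw [hx, hy, mul_one]

/-- for `d ≥ 3` and distinct `x y : Fin d`, the Liu–Chiribella `(2,2,?)`
process `R` is not an ordinary bipartite process matrix with trivial global input and
output: there exist (not necessarily bistochastic) channel Choi operators `C1`, `C2`
with `Tr[Rᵀ (C1 ⊗ C2)] ≠ 1`. -/
theorem stmt14 (d : ℕ) (hd : 3 ≤ d) (x y : Fin d) (hxy : x ≠ y) :
    ∃ (C1 C2 : Matrix (Fin d × Fin d) (Fin d × Fin d) ℂ),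
      C1.PosSemidef ∧
      (∀ a a', (∑ b : Fin d, C1 (a, b) (a', b)) = if a = a' then 1 else 0) ∧
      C2.PosSemidef ∧
      (∀ a a', (∑ b : Fin d, C2 (a, b) (a', b)) = if a = a' then 1 else 0) ∧
      ((RLC22 d x y)ᵀ * kron2 C1 C2).trace ≠ 1 := by
  refine ⟨Cx d x, Cx d x, Cx_psd d x, Cx_tr d x, Cx_psd d x, Cx_tr d x, ?_⟩
  rw [trace_val d x y hxy]
  intro h
  have hd2 : (d : ℂ) = 2 := by linear_combination h
  have : d = 2 := by exact_mod_cast hd2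
  omega
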